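/- arXiv:1111.1292 — 2 statements merged into one kernel-verified Lean document; each statement's English description precedes it below -/
import Mathlib

section
/- Let R be a commutative unital ring that is torsion-free as a module over ℤ, and let δ : R → R be a derivation. Then the differential polynomial ring R[x;id_R,δ] is a simple ring if and only if R is δ-simple and δ is non-zero. -/
open Finsupp

section Aux
variable {R S : Type*} [CommRing R] [Ring S] (δ : R → R) (f : R →+* S) (x : S)

/-- The map sending a finitely supported family to `Σ f(aᵢ) xⁱ`. -/
noncomputable def PhiOre (a : ℕ →₀ R) : S := a.sum fun i r => f r * x ^ i

lemma PhiOre_zero : PhiOre f x 0 = 0 := Finsupp.sum_zero_index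

lemma PhiOre_single (i : ℕ) (r : R) : PhiOre f x (Finsupp.single i r) = f r * x ^ i :=
  Finsupp.sum_single_index (by simp)

lemma PhiOre_add (a b : ℕ →₀ R) : PhiOre f x (a + b) = PhiOre f x a + PhiOre f x b :=
  Finsupp.sum_add_index' (fun i => by simp) (fun i r s => by rw [map_add, add_mul])

lemma PhiOre_neg (a : ℕ →₀ R) : PhiOre f x (-a) = -PhiOre f x a := by
  have := PhiOre_add f x a (-a)
  rw [add_neg_cancel, PhiOre_zero] at this

  linear_combination (norm := noncomm_ring) -this


lemma PhiOre_sub (a b : ℕ →₀ R) : PhiOre f x (a - b) = PhiOre f x a - PhiOre f x b := by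
  rw [sub_eq_add_neg, PhiOre_add, PhiOre_neg, sub_eq_add_neg]

/-- L1: left multiplication by `f r`. -/
lemma PhiOre_fmul (r : R) (a : ℕ →₀ R) :
    f r * PhiOre f x a = PhiOre f x (a.mapRange (r * ·) (mul_zero r)) := by
  rw [PhiOre, PhiOre, Finsupp.sum_mapRange_index (by simp), Finsupp.mul_sum]
  exact Finsupp.sum_congr fun i _ => by rw [← mul_assoc, ← map_mul]

/-- L3: right multiplication by `x`. -/
lemma PhiOre_mulx (a : ℕ →₀ R) :
    PhiOre f x a * x = PhiOre f x (a.mapDomain (· + 1)) := by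
  rw [PhiOre, PhiOre, Finsupp.sum_mapDomain_index (by simp)
    (fun i r s => by rw [map_add, add_mul]), Finsupp.sum_mul]
  exact Finsupp.sum_congr fun i _ => by rw [mul_assoc, ← pow_succ]


/-- L2: left multiplication by `x`. -/
lemma PhiOre_xmul (hrel : ∀ r : R, x * f r = f r * x + f (δ r)) (hδ0 : δ 0 = 0) (a : ℕ →₀ R) :
    x * PhiOre f x a = PhiOre f x a * x + PhiOre f x (a.mapRange δ hδ0) := by
  rw [PhiOre_mulx]
  rw [PhiOre, PhiOre, PhiOre, Finsupp.mul_sum,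
    Finsupp.sum_mapDomain_index (by simp) (fun i r s => by rw [map_add, add_mul]),
    Finsupp.sum_mapRange_index (by simp [hδ0]), ← Finsupp.sum_add]
  refine Finsupp.sum_congr fun i _ => ?_
  rw [← mul_assoc, hrel, add_mul, mul_assoc, ← pow_succ']


/-- `x^i · f(r) = f(r) · x^i + (terms of degree < i with top coefficient i • δ r)`. -/
lemma PhiOre_pow_comm (hrel : ∀ r : R, x * f r = f r * x + f (δ r)) :
    ∀ (i : ℕ) (r : R), ∃ d : ℕ →₀ R,
      x ^ i * f r = f r * x ^ i + PhiOre f x d ∧ (∀ j, i ≤ j → d j = 0) ∧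
      (∀ j, j + 1 = i → d j = i • δ r) := by
  intro i
  induction i with
  | zero =>
    intro r
    exact ⟨0, by simp [PhiOre_zero], fun j _ => rfl, fun j h => by omega⟩
  | succ i ih =>
    intro r
    obtain ⟨d1, hd1, hd1v, hd1t⟩ := ih r
    obtain ⟨d2, hd2, hd2v, hd2t⟩ := ih (δ r)
    refine ⟨d1.mapDomain (· + 1) + Finsupp.single i (δ r) + d2, ?_, ?_, ?_⟩
    · have : x ^ (i + 1) * f r = x ^ i * (x * f r) := by
        rw [← mul_assoc, ← pow_succ]

      rw [this, hrel r, mul_add, ← mul_assoc, hd1, hd2, PhiOre_add, PhiOre_add,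
        PhiOre_single, add_mul, ← PhiOre_mulx, mul_assoc, ← pow_succ]
      abel
    · intro j hj
      obtain ⟨k, rfl⟩ : ∃ k, j = k + 1 := ⟨j - 1, by omega⟩
      rw [Finsupp.add_apply, Finsupp.add_apply,
        Finsupp.mapDomain_apply (add_left_injective 1), Finsupp.single_apply,
        hd1v k (by omega), hd2v _ (by omega), if_neg (by omega)]
      simp
    · intro j hj
      obtain rfl : j = i := by omega
      rw [Finsupp.add_apply, Finsupp.add_apply, Finsupp.single_apply, if_pos rfl,
        hd2v _ le_rfl, add_zero]

      have hmd : (d1.mapDomain (· + 1)) j = j • δ r := by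
        rcases Nat.eq_zero_or_pos j with rfl | hi
        · rw [Finsupp.mapDomain_notin_range _ _ (by simp), zero_smul]
        · obtain ⟨k, rfl⟩ : ∃ k, j = k + 1 := ⟨j - 1, by omega⟩
          rw [Finsupp.mapDomain_apply (add_left_injective 1), hd1t k rfl]
      rw [hmd, succ_nsmul]


/-- If all coefficients of `a` vanish from degree `m` on, then the commutator
`Φ(a)·f(r) - f(r)·Φ(a)` has coefficients vanishing from degree `m - 1` on. -/
lemma PhiOre_comm_coeff (hrel : ∀ r : R, x * f r = f r * x + f (δ r)) (a : ℕ →₀ R) :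
    ∀ (m : ℕ) (r : R), (∀ k, m ≤ k → a k = 0) →
      ∃ d : ℕ →₀ R, PhiOre f x a * f r - f r * PhiOre f x a = PhiOre f x d ∧
        ∀ k, m ≤ k + 1 → d k = 0 := by
  induction a using Finsupp.induction with
  | zero =>
    intro m r _
    exact ⟨0, by simp [PhiOre_zero], fun k _ => rfl⟩
  | single_add i c b hib hc ih =>
    intro m r hma
    have hbi : b i = 0 := Finsupp.notMem_support_iff.1 hib
    have him : i < m := by
      by_contra h
      have := hma i (by omega)
      rw [Finsupp.add_apply, Finsupp.single_apply, if_pos rfl, hbi, add_zero] at this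
      exact hc this
    have hmb : ∀ k, m ≤ k → b k = 0 := by
      intro k hk
      have := hma k hk
      rw [Finsupp.add_apply, Finsupp.single_apply, if_neg (by omega), zero_add] at this
      exact this
    obtain ⟨db, hdb, hdbv⟩ := ih m r hmb
    obtain ⟨di, hdi, hdiv, -⟩ := PhiOre_pow_comm δ f x hrel i r
    refine ⟨di.mapRange (c * ·) (mul_zero c) + db, ?_, ?_⟩
    · rw [PhiOre_add, PhiOre_add, PhiOre_single]
      have h1 : f c * x ^ i * f r = f r * (f c * x ^ i) + f c * PhiOre f x di := by
        rw [mul_assoc, hdi, mul_add, ← mul_assoc, ← mul_assoc, ← map_mul, ← map_mul,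
          mul_comm c r]
      rw [← PhiOre_fmul]
      have h2 := hdb
      calc (f c * x ^ i + PhiOre f x b) * f r - f r * (f c * x ^ i + PhiOre f x b)
          = (f c * x ^ i * f r - f r * (f c * x ^ i))
            + (PhiOre f x b * f r - f r * PhiOre f x b) := by noncomm_ring
        _ = f c * PhiOre f x di + PhiOre f x db := by rw [h1, h2]; abel
    · intro k hk
      rw [Finsupp.add_apply, Finsupp.mapRange_apply, hdiv k (by omega), hdbv k hk,
        mul_zero, add_zero]


lemma closure_mul_left (hsurj : Function.Surjective (PhiOre f x)) (T : Set S)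
    (h0 : (0 : S) ∈ T) (hadd : ∀ {s t : S}, s ∈ T → t ∈ T → s + t ∈ T)
    (hx : ∀ t ∈ T, x * t ∈ T) (hfr : ∀ (r : R), ∀ t ∈ T, f r * t ∈ T) :
    ∀ (u t : S), t ∈ T → u * t ∈ T := by
  have hpow : ∀ (i : ℕ), ∀ t ∈ T, x ^ i * t ∈ T := by
    intro i
    induction i with
    | zero => intro t ht; simpa using ht
    | succ i ih =>
      intro t ht

      have : x ^ (i + 1) * t = x ^ i * (x * t) := by rw [pow_succ, mul_assoc]
      rw [this]
      exact ih _ (hx t ht)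
  intro u t ht
  obtain ⟨a, rfl⟩ := hsurj u
  induction a using Finsupp.induction with
  | zero => rw [PhiOre_zero, zero_mul]; exact h0
  | single_add i c b _ _ ih =>
    rw [PhiOre_add, add_mul, PhiOre_single, mul_assoc]
    exact hadd (hfr c _ (hpow i t ht)) ih

lemma closure_mul_right (hsurj : Function.Surjective (PhiOre f x)) (T : Set S)
    (h0 : (0 : S) ∈ T) (hadd : ∀ {s t : S}, s ∈ T → t ∈ T → s + t ∈ T)
    (hx : ∀ t ∈ T, t * x ∈ T) (hfr : ∀ (r : R), ∀ t ∈ T, t * f r ∈ T) :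
    ∀ (u t : S), t ∈ T → t * u ∈ T := by
  have hpow : ∀ (i : ℕ), ∀ t ∈ T, t * x ^ i ∈ T := by
    intro i
    induction i with
    | zero => intro t ht; simpa using ht
    | succ i ih =>
      intro t ht

      have : t * x ^ (i + 1) = (t * x) * x ^ i := by rw [pow_succ', ← mul_assoc]
      rw [this]
      exact ih _ (hx t ht)
  intro u t ht
  obtain ⟨a, rfl⟩ := hsurj u
  induction a using Finsupp.induction with
  | zero => rw [PhiOre_zero, mul_zero]; exact h0
  | single_add i c b _ _ ih =>
    rw [PhiOre_add, mul_add, PhiOre_single, ← mul_assoc]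
    exact hadd (hpow i _ (hfr c t ht)) ih

/-- Right multiplication by `f r` preserves "all coefficients in `J`", provided `J` is a
two-sided ideal invariant under `δ`. -/
lemma TJ_mul_fr (hrel : ∀ r : R, x * f r = f r * x + f (δ r)) (J : TwoSidedIdeal R) :
    ∀ (a : ℕ →₀ R), (∀ j, a j ∈ J) → ∀ r : R,
      ∃ b : ℕ →₀ R, (∀ j, b j ∈ J) ∧ PhiOre f x a * f r = PhiOre f x b := by
  have aux : ∀ (i : ℕ) (c : R), c ∈ J → ∀ r : R,
      ∃ b : ℕ →₀ R, (∀ j, b j ∈ J) ∧ (f c * x ^ i) * f r = PhiOre f x b := by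
    intro i
    induction i with
    | zero =>
      intro c hc r

      refine ⟨Finsupp.single 0 (c * r), fun j => ?_, by

        rw [PhiOre_single, pow_zero, mul_one, mul_one, map_mul]⟩
      rw [Finsupp.single_apply]
      split
      · exact J.mul_mem_right c r hc
      · exact J.zero_mem
    | succ i ih =>
      intro c hc r
      obtain ⟨b1, hb1, hb1e⟩ := ih c hc r
      obtain ⟨b2, hb2, hb2e⟩ := ih c hc (δ r)
      refine ⟨b1.mapDomain (· + 1) + b2, fun j => ?_, ?_⟩
      · rw [Finsupp.add_apply]
        refine J.add_mem ?_ (hb2 j)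
        rcases Nat.eq_zero_or_pos j with rfl | hj
        · rw [Finsupp.mapDomain_notin_range _ _ (by simp)]; exact J.zero_mem
        · obtain ⟨k, rfl⟩ : ∃ k, j = k + 1 := ⟨j - 1, by omega⟩
          rw [Finsupp.mapDomain_apply (add_left_injective 1)]
          exact hb1 k
      · have h1 : (f c * x ^ (i + 1)) * f r
            = ((f c * x ^ i) * f r) * x + (f c * x ^ i) * f (δ r) := by
          have h2 : f c * x ^ (i + 1) = f c * x ^ i * x := by rw [pow_succ, mul_assoc]
          rw [h2, mul_assoc, hrel r]
          noncomm_ring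
        rw [h1, hb1e, hb2e, PhiOre_add, PhiOre_mulx]
  intro a
  induction a using Finsupp.induction with
  | zero =>
    intro _ r
    exact ⟨0, fun j => J.zero_mem, by rw [PhiOre_zero, zero_mul]⟩
  | single_add i c b hib _ ih =>
    intro ha r
    have hbi : b i = 0 := Finsupp.notMem_support_iff.1 hib
    have hcJ : c ∈ J := by
      have := ha i
      rwa [Finsupp.add_apply, Finsupp.single_apply, if_pos rfl, hbi, add_zero] at this
    have hbJ : ∀ j, b j ∈ J := by
      intro j
      rcases eq_or_ne j i with rfl | hji
      · rw [hbi]; exact J.zero_mem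
      · have := ha j
        rwa [Finsupp.add_apply, Finsupp.single_apply, if_neg (by omega), zero_add] at this
    obtain ⟨b2, hb2, hb2e⟩ := ih hbJ r
    obtain ⟨b1, hb1, hb1e⟩ := aux i c hcJ r
    refine ⟨b1 + b2, fun j => J.add_mem (hb1 j) (hb2 j), ?_⟩
    rw [PhiOre_add, add_mul, PhiOre_single, hb1e, hb2e, PhiOre_add]

end Aux


/-- `δ` is a `σ`-derivation of `R`: it is additive and satisfies the twisted Leibniz rule
`δ(ab) = σ(a)δ(b) + δ(a)b`. -/
def IsSigmaDerivation {R : Type*} [Ring R] (σ : R →+* R) (δ : R → R) : Prop :=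
  (∀ a b : R, δ (a + b) = δ a + δ b) ∧ ∀ a b : R, δ (a * b) = σ a * δ b + δ a * b

/-- `S`, together with the ring morphism `f : R →+* S` and the element `x : S`, is an Ore
extension `R[x;σ,δ]`: the powers `1, x, x², …` form a basis of `S` as a left `R`-module
(i.e. every element of `S` is, in a unique way, a finite sum `Σᵢ f(aᵢ) xⁱ`), and the
commutation rule `x·r = σ(r)·x + δ(r)` holds for all `r ∈ R`. -/
structure IsOreExtension {R S : Type*} [Ring R] [Ring S]
    (σ : R →+* R) (δ : R → R) (f : R →+* S) (x : S) : Prop where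
  basis : Function.Bijective fun a : ℕ →₀ R => a.sum fun i r => f r * x ^ i
  rel : ∀ r : R, x * f r = f (σ r) * x + f (δ r)

/-- `R` is `σ`-`δ`-simple: the only two-sided ideals `J` of `R` with `σ(J) ⊆ J` and
`δ(J) ⊆ J` are `{0}` and `R`. -/
def IsSigmaDeltaSimple {R : Type*} [Ring R] (σ : R →+* R) (δ : R → R) : Prop :=
  ∀ J : TwoSidedIdeal R, (∀ a ∈ J, σ a ∈ J) → (∀ a ∈ J, δ a ∈ J) → J = ⊥ ∨ J = ⊤

/-- `R` is `δ`-simple: the only two-sided ideals `J` of `R` with `δ(J) ⊆ J` are `{0}`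
and `R`. -/
def IsDeltaSimple {R : Type*} [Ring R] (δ : R → R) : Prop :=
  ∀ J : TwoSidedIdeal R, (∀ a ∈ J, δ a ∈ J) → J = ⊥ ∨ J = ⊤

/-- If `R` is a commutative ring which is torsion-free as a `ℤ`-module, then
`R[x;id,δ]` is simple if and only if `R` is `δ`-simple and `δ` is non-zero. -/
theorem stmt_18 {R S : Type*} [CommRing R] [Ring S] (δ : R → R)
    (hδ : IsSigmaDerivation (RingHom.id R) δ)
    (htf : ∀ (n : ℕ) (r : R), 0 < n → n • r = 0 → r = 0)
    (f : R →+* S) (x : S) (hS : IsOreExtension (RingHom.id R) δ f x) :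
    IsSimpleRing S ↔ IsDeltaSimple δ ∧ δ ≠ 0 := by
  classical
  obtain ⟨hδadd, hδmul⟩ := hδ
  have hδ0 : δ 0 = 0 := by
    have h := hδadd 0 0
    rw [add_zero] at h
    nth_rewrite 1 [← add_zero (δ 0)] at h
    exact (add_left_cancel h).symm
  have hrel : ∀ r : R, x * f r = f r * x + f (δ r) := fun r => by
    simpa using hS.rel r
  have hinj : Function.Injective (PhiOre f x) := hS.basis.injective
  have hsurj : Function.Surjective (PhiOre f x) := hS.basis.surjective
  have hone : PhiOre f x (Finsupp.single 0 1) = 1 := by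
    rw [PhiOre_single, map_one, pow_zero, one_mul]
  have hxx : PhiOre f x (Finsupp.single 1 1) = x := by
    rw [PhiOre_single, map_one, pow_one, one_mul]
  constructor
  · intro hsimple
    have hS1 : (1 : S) ≠ 0 := by
      haveI := hsimple; exact one_ne_zero
    have hR1 : (1 : R) ≠ 0 := by
      intro h10
      refine hS1 ?_
      rw [← hone, ← PhiOre_zero f x, h10, Finsupp.single_zero]
    constructor
    · -- δ-simplicity of R
      intro J hJδ
      set T : Set S := {s | ∃ a : ℕ →₀ R, (∀ j, a j ∈ J) ∧ PhiOre f x a = s} with hT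
      have hshift : ∀ (a : ℕ →₀ R), (∀ j, a j ∈ J) →
          ∀ j, (a.mapDomain (· + 1)) j ∈ J := by
        intro a ha j
        rcases Nat.eq_zero_or_pos j with rfl | hj
        · rw [Finsupp.mapDomain_notin_range _ _ (by simp)]; exact J.zero_mem
        · obtain ⟨k, rfl⟩ : ∃ k, j = k + 1 := ⟨j - 1, by omega⟩
          rw [Finsupp.mapDomain_apply (add_left_injective 1)]; exact ha k
      have h0T : (0 : S) ∈ T := ⟨0, fun j => J.zero_mem, PhiOre_zero f x⟩
      have haddT : ∀ {s t : S}, s ∈ T → t ∈ T → s + t ∈ T := by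
        rintro s t ⟨a, ha, rfl⟩ ⟨b, hb, rfl⟩
        exact ⟨a + b, fun j => by
          rw [Finsupp.add_apply]; exact J.add_mem (ha j) (hb j), PhiOre_add f x a b⟩
      have hnegT : ∀ {s : S}, s ∈ T → -s ∈ T := by
        rintro s ⟨a, ha, rfl⟩
        exact ⟨-a, fun j => by
          rw [Finsupp.neg_apply]; exact J.neg_mem (ha j), PhiOre_neg f x a⟩
      have hxT : ∀ t ∈ T, x * t ∈ T := by
        rintro t ⟨a, ha, rfl⟩
        refine ⟨a.mapDomain (· + 1) + a.mapRange δ hδ0, fun j => ?_, ?_⟩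
        · rw [Finsupp.add_apply, Finsupp.mapRange_apply]
          exact J.add_mem (hshift a ha j) (hJδ _ (ha j))
        · rw [PhiOre_add, ← PhiOre_mulx, PhiOre_xmul δ f x hrel hδ0]
      have hfT : ∀ (r : R), ∀ t ∈ T, f r * t ∈ T := by
        rintro r t ⟨a, ha, rfl⟩
        exact ⟨a.mapRange (r * ·) (mul_zero r), fun j => by
          rw [Finsupp.mapRange_apply]; exact J.mul_mem_left r _ (ha j),
          (PhiOre_fmul f x r a).symm⟩
      have hTx : ∀ t ∈ T, t * x ∈ T := by
        rintro t ⟨a, ha, rfl⟩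
        exact ⟨a.mapDomain (· + 1), hshift a ha, (PhiOre_mulx f x a).symm⟩
      have hTfr : ∀ (r : R), ∀ t ∈ T, t * f r ∈ T := by
        rintro r t ⟨a, ha, rfl⟩
        obtain ⟨b, hb, hbe⟩ := TJ_mul_fr δ f x hrel J a ha r
        exact ⟨b, hb, hbe.symm⟩
      set I : TwoSidedIdeal S := TwoSidedIdeal.mk' T h0T haddT hnegT
        (fun {u t} ht => closure_mul_left f x hsurj T h0T haddT hxT hfT u t ht)
        (fun {t u} ht => closure_mul_right f x hsurj T h0T haddT hTx hTfr u t ht) with hI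
      have memI : ∀ s : S, s ∈ I ↔ s ∈ T := fun s =>
        TwoSidedIdeal.mem_mk' T h0T haddT hnegT _ _ s
      rcases hsimple.simple.eq_bot_or_eq_top I with hbot | htop
      · left
        refine SetLike.ext fun a => ?_
        rw [TwoSidedIdeal.mem_bot]
        constructor
        · intro haJ
          have hfa : f a ∈ I := (memI _).2 ⟨Finsupp.single 0 a, fun j => by
              rw [Finsupp.single_apply]
              split
              · exact haJ
              · exact J.zero_mem,
            by rw [PhiOre_single, pow_zero, mul_one]⟩
          rw [hbot, TwoSidedIdeal.mem_bot] at hfa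
          have h2 : PhiOre f x (Finsupp.single 0 a) = PhiOre f x 0 := by
            rw [PhiOre_zero, PhiOre_single, pow_zero, mul_one, hfa]
          exact Finsupp.single_eq_zero.1 (hinj h2)
        · rintro rfl; exact J.zero_mem
      · right
        have h1 : (1 : S) ∈ I := by rw [htop]; exact TwoSidedIdeal.mem_top _
        obtain ⟨a, ha, hae⟩ := (memI 1).1 h1
        have haeq : a = Finsupp.single 0 1 := hinj (by rw [hae, hone])
        refine TwoSidedIdeal.eq_top J ?_
        have := ha 0
        rwa [haeq, Finsupp.single_apply, if_pos rfl] at this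
    · -- δ ≠ 0
      intro hδz
      have hxfr : ∀ r : R, x * f r = f r * x := fun r => by
        rw [hrel r, hδz]; simp
      have hcomm : ∀ (a : ℕ →₀ R) (r : R),
          PhiOre f x a * f r = f r * PhiOre f x a := by
        have hpowfr : ∀ (i : ℕ) (r : R), x ^ i * f r = f r * x ^ i := by
          intro i
          induction i with
          | zero => intro r; simp
          | succ i ih =>
            intro r
            rw [pow_succ, mul_assoc, hxfr r, ← mul_assoc, ih r, mul_assoc]
        intro a r
        induction a using Finsupp.induction with
        | zero => simp [PhiOre_zero]
        | single_add i c b _ _ ih =>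
          rw [PhiOre_add, add_mul, mul_add, ih, PhiOre_single, mul_assoc, hpowfr,
            ← mul_assoc, ← map_mul, mul_comm c r, map_mul, mul_assoc]
      set T : Set S := {s | ∃ a : ℕ →₀ R, a 0 = 0 ∧ PhiOre f x a = s} with hT
      have h0T : (0 : S) ∈ T := ⟨0, rfl, PhiOre_zero f x⟩
      have haddT : ∀ {s t : S}, s ∈ T → t ∈ T → s + t ∈ T := by
        rintro s t ⟨a, ha, rfl⟩ ⟨b, hb, rfl⟩
        exact ⟨a + b, by rw [Finsupp.add_apply, ha, hb, add_zero], PhiOre_add f x a b⟩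
      have hnegT : ∀ {s : S}, s ∈ T → -s ∈ T := by
        rintro s ⟨a, ha, rfl⟩
        exact ⟨-a, by rw [Finsupp.neg_apply, ha, neg_zero], PhiOre_neg f x a⟩
      have hsh0 : ∀ a : ℕ →₀ R, (a.mapDomain (· + 1)) 0 = 0 := fun a =>
        Finsupp.mapDomain_notin_range _ _ (by simp)
      have hxT : ∀ t ∈ T, x * t ∈ T := by
        rintro t ⟨a, ha, rfl⟩
        refine ⟨a.mapDomain (· + 1) + a.mapRange δ hδ0, ?_, ?_⟩
        · rw [Finsupp.add_apply, Finsupp.mapRange_apply, hsh0, ha, hδ0, add_zero]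
        · rw [PhiOre_add, ← PhiOre_mulx, PhiOre_xmul δ f x hrel hδ0]
      have hfT : ∀ (r : R), ∀ t ∈ T, f r * t ∈ T := by
        rintro r t ⟨a, ha, rfl⟩
        exact ⟨a.mapRange (r * ·) (mul_zero r), by
          rw [Finsupp.mapRange_apply, ha, mul_zero], (PhiOre_fmul f x r a).symm⟩
      have hTx : ∀ t ∈ T, t * x ∈ T := by
        rintro t ⟨a, ha, rfl⟩
        exact ⟨a.mapDomain (· + 1), hsh0 a, (PhiOre_mulx f x a).symm⟩
      have hTfr : ∀ (r : R), ∀ t ∈ T, t * f r ∈ T := by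
        rintro r t ht
        rw [show t * f r = f r * t from by
          obtain ⟨a, _, rfl⟩ := ht; exact hcomm a r]
        exact hfT r t ht
      set I : TwoSidedIdeal S := TwoSidedIdeal.mk' T h0T haddT hnegT
        (fun {u t} ht => closure_mul_left f x hsurj T h0T haddT hxT hfT u t ht)
        (fun {t u} ht => closure_mul_right f x hsurj T h0T haddT hTx hTfr u t ht) with hI
      have memI : ∀ s : S, s ∈ I ↔ s ∈ T := fun s =>
        TwoSidedIdeal.mem_mk' T h0T haddT hnegT _ _ s
      have hxI : x ∈ I := (memI x).2 ⟨Finsupp.single 1 1, by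
        rw [Finsupp.single_apply]; exact if_neg one_ne_zero, hxx⟩
      rcases hsimple.simple.eq_bot_or_eq_top I with hbot | htop
      · rw [hbot, TwoSidedIdeal.mem_bot] at hxI
        have h2 : PhiOre f x (Finsupp.single 1 1) = PhiOre f x 0 := by
          rw [PhiOre_zero, hxx, hxI]
        exact hR1 (Finsupp.single_eq_zero.1 (hinj h2))
      · have h1 : (1 : S) ∈ I := by rw [htop]; exact TwoSidedIdeal.mem_top _
        obtain ⟨a, ha0, hae⟩ := (memI 1).1 h1
        have haeq : a = Finsupp.single 0 1 := hinj (by rw [hae, hone])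
        rw [haeq, Finsupp.single_apply, if_pos rfl] at ha0
        exact hR1 ha0
  · rintro ⟨hds, hδne⟩
    obtain ⟨r₀, hr₀⟩ : ∃ r, δ r ≠ 0 := by
      by_contra h
      push_neg at h
      exact hδne (funext h)
    have hS1 : (1 : S) ≠ 0 := by
      intro h
      have h2 : PhiOre f x (Finsupp.single 0 (1 : R)) = PhiOre f x 0 := by
        rw [PhiOre_zero, hone, h]
      have h3 := Finsupp.single_eq_zero.1 (hinj h2)
      exact hr₀ (by rw [show r₀ = 0 from by rw [← one_mul r₀, h3, zero_mul], hδ0])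
    -- the coefficient function
    set co : S → (ℕ →₀ R) := fun s => (Equiv.ofBijective _ hS.basis).symm s with hco
    have hco_spec : ∀ s, PhiOre f x (co s) = s := fun s =>
      (Equiv.ofBijective _ hS.basis).apply_symm_apply s
    have hco_eq : ∀ (a : ℕ →₀ R) (s : S), PhiOre f x a = s → co s = a :=
      fun a s h => hinj (show PhiOre f x (co s) = PhiOre f x a by rw [hco_spec, h])
    have hco_zero : co 0 = 0 := hco_eq 0 0 (PhiOre_zero f x)
    haveI : Nontrivial (TwoSidedIdeal S) := ⟨⟨⊥, ⊤, fun heq => hS1 ((TwoSidedIdeal.mem_bot _).1 (by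
      rw [heq]; exact TwoSidedIdeal.mem_top _))⟩⟩
    refine ⟨⟨fun I => ?_⟩⟩
    by_cases hIbot : I = ⊥
    · exact Or.inl hIbot
    right
    obtain ⟨s₀, hs₀I, hs₀⟩ : ∃ s, s ∈ I ∧ s ≠ 0 := by
      by_contra h
      push_neg at h
      refine hIbot (SetLike.ext fun s => ?_)
      rw [TwoSidedIdeal.mem_bot]
      exact ⟨fun hs => h s hs, fun hs => by rw [hs]; exact I.zero_mem⟩
    have hPex : ∃ n : ℕ, ∃ s, s ∈ I ∧ s ≠ 0 ∧ ∀ j, n < j → co s j = 0 := by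
      refine ⟨(co s₀).support.sup id, s₀, hs₀I, hs₀, fun j hj => ?_⟩
      by_contra h
      have hmem : j ∈ (co s₀).support := Finsupp.mem_support_iff.2 h
      have := Finset.le_sup (f := id) hmem
      simp only [id] at this
      omega
    have hPn := Nat.find_spec hPex
    have hPmin := fun m (hm : m < Nat.find hPex) => Nat.find_min hPex hm
    set n := Nat.find hPex with hn
    obtain ⟨p₁, hp₁I, hp₁ne, hp₁deg⟩ := hPn
    -- the ideal of leading coefficients
    set LC : Set R :=
      {r | ∃ s, s ∈ I ∧ (∀ j, n < j → co s j = 0) ∧ co s n = r} with hLC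
    have h0L : (0 : R) ∈ LC := ⟨0, I.zero_mem, fun j _ => by rw [hco_zero]; rfl,
      by rw [hco_zero]; rfl⟩
    have haddL : ∀ {r t : R}, r ∈ LC → t ∈ LC → r + t ∈ LC := by
      rintro r t ⟨s, hsI, hsd, rfl⟩ ⟨u, huI, hud, rfl⟩
      refine ⟨s + u, I.add_mem hsI huI, fun j hj => ?_, ?_⟩ <;>
        rw [hco_eq (co s + co u) (s + u) (by rw [PhiOre_add, hco_spec, hco_spec]),
          Finsupp.add_apply]
      rw [hsd j hj, hud j hj, add_zero]
    have hnegL : ∀ {r : R}, r ∈ LC → -r ∈ LC := by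
      rintro r ⟨s, hsI, hsd, rfl⟩
      refine ⟨-s, I.neg_mem hsI, fun j hj => ?_, ?_⟩ <;>
        rw [hco_eq (-(co s)) (-s) (by rw [PhiOre_neg, hco_spec]), Finsupp.neg_apply]
      rw [hsd j hj, neg_zero]
    have hmulL : ∀ (c : R) {r : R}, r ∈ LC → c * r ∈ LC := by
      rintro c r ⟨s, hsI, hsd, rfl⟩
      refine ⟨f c * s, I.mul_mem_left _ _ hsI, fun j hj => ?_, ?_⟩ <;>
        rw [hco_eq ((co s).mapRange (c * ·) (mul_zero c)) (f c * s)
          (by rw [← PhiOre_fmul, hco_spec]), Finsupp.mapRange_apply]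
      rw [hsd j hj, mul_zero]
    have hLδ : ∀ r ∈ LC, δ r ∈ LC := by
      rintro r ⟨s, hsI, hsd, rfl⟩
      have hce : co (x * s - s * x) = (co s).mapRange δ hδ0 := by
        refine hco_eq _ _ ?_
        have := PhiOre_xmul δ f x hrel hδ0 (co s)
        rw [hco_spec] at this
        rw [this]
        abel
      refine ⟨x * s - s * x,
        I.sub_mem (I.mul_mem_left _ _ hsI) (I.mul_mem_right _ _ hsI),
        fun j hj => ?_, ?_⟩ <;> rw [hce, Finsupp.mapRange_apply]
      rw [hsd j hj, hδ0]
    set L : TwoSidedIdeal R := TwoSidedIdeal.mk' LC h0L haddL hnegL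
      (fun {c r} hr => hmulL c hr)
      (fun {r c} hr => by rw [mul_comm]; exact hmulL c hr) with hL
    have memL : ∀ r : R, r ∈ L ↔ r ∈ LC := fun r =>
      TwoSidedIdeal.mem_mk' LC h0L haddL hnegL _ _ r
    have hc₁ : co p₁ n ≠ 0 := by
      intro hc0
      rcases Nat.eq_zero_or_pos n with hn0 | hpos
      · refine hp₁ne ?_
        rw [← hco_spec p₁, show co p₁ = 0 from Finsupp.ext fun j => ?_, PhiOre_zero]
        rw [Finsupp.coe_zero, Pi.zero_apply]
        rcases Nat.eq_zero_or_pos j with rfl | hj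
        · rw [hn0] at hc0; exact hc0
        · exact hp₁deg j (by omega)
      · refine hPmin (n - 1) (by omega) ⟨p₁, hp₁I, hp₁ne, fun j hj => ?_⟩
        rcases eq_or_lt_of_le (show n ≤ j by omega) with rfl | hj2
        · exact hc0
        · exact hp₁deg j hj2
    rcases hds L (fun r hr => (memL _).2 (hLδ r ((memL _).1 hr))) with hbot | htop
    · exfalso
      have hmem : co p₁ n ∈ L := (memL _).2 ⟨p₁, hp₁I, hp₁deg, rfl⟩
      rw [hbot, TwoSidedIdeal.mem_bot] at hmem
      exact hc₁ hmem
    obtain ⟨p, hpI, hpdeg, hplc⟩ : ∃ s, s ∈ I ∧ (∀ j, n < j → co s j = 0) ∧ co s n = 1 :=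
      (memL 1).1 (by rw [htop]; exact TwoSidedIdeal.mem_top _)
    have hn0 : n = 0 := by
      by_contra hnz
      obtain ⟨m, hm⟩ : ∃ m, n = m + 1 := ⟨n - 1, by omega⟩
      have key : ∀ r : R, δ r = 0 := by
        intro r
        set a' : ℕ →₀ R := co p - Finsupp.single n 1 with ha'
        have ha'e : PhiOre f x a' = p - x ^ n := by
          rw [PhiOre_sub, hco_spec, PhiOre_single, map_one, one_mul]
        have ha'v : ∀ k, n ≤ k → a' k = 0 := by
          intro k hk
          rw [ha', Finsupp.sub_apply, Finsupp.single_apply]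
          rcases eq_or_lt_of_le hk with rfl | hk2
          · rw [if_pos rfl, hplc, sub_self]
          · rw [if_neg (by omega), hpdeg k hk2, sub_zero]
        obtain ⟨d', hd'e, hd'v⟩ := PhiOre_comm_coeff δ f x hrel a' n r ha'v
        obtain ⟨dn, hdne, hdnv, hdnt⟩ := PhiOre_pow_comm δ f x hrel n r
        have hqe : p * f r - f r * p = PhiOre f x (d' + dn) := by
          have hp2 : p = PhiOre f x a' + x ^ n := by rw [ha'e]; abel
          calc p * f r - f r * p
              = (PhiOre f x a' * f r - f r * PhiOre f x a')
                + (x ^ n * f r - f r * x ^ n) := by rw [hp2]; noncomm_ring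
            _ = PhiOre f x d' + PhiOre f x dn := by rw [hd'e, hdne]; abel
            _ = PhiOre f x (d' + dn) := (PhiOre_add f x d' dn).symm
        have hq0 : p * f r - f r * p = 0 := by
          by_contra hq
          refine hPmin m (by omega) ⟨_, I.sub_mem (I.mul_mem_right _ _ hpI)
            (I.mul_mem_left _ _ hpI), hq, fun j hj => ?_⟩
          rw [hco_eq _ _ hqe.symm, Finsupp.add_apply, hd'v j (by omega),
            hdnv j (by omega), add_zero]
        have hdd : d' + dn = 0 := hinj (by rw [PhiOre_add, ← PhiOre_add, ← hqe, hq0, PhiOre_zero])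
        have hm0 : d' m + dn m = 0 := by
          have := congrArg (fun v : ℕ →₀ R => v m) hdd
          simpa using this
        rw [hd'v m (by omega), hdnt m (by omega), zero_add] at hm0
        exact htf n (δ r) (by omega) hm0
      exact hr₀ (key r₀)
    have hpeq : co p = Finsupp.single 0 1 := by
      refine Finsupp.ext fun j => ?_
      rcases Nat.eq_zero_or_pos j with rfl | hj
      · rw [← hn0] at *; rw [hplc, Finsupp.single_apply, if_pos rfl]
      · rw [hpdeg j (by omega), Finsupp.single_apply, if_neg (by omega)]
    have hp1 : p = 1 := by rw [← hco_spec p, hpeq, hone]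
    exact TwoSidedIdeal.eq_top I (hp1 ▸ hpI)
end

section
/- Let R be a commutative domain of characteristic zero and δ : R → R a derivation. Then the differential polynomial ring R[x;id_R,δ] is a simple ring if and only if R is δ-simple and R is a maximal commutative subring of R[x;id_R,δ]. -/
namespace Stmt19Aux

variable {R S : Type*} [CommRing R] [Ring S] {δ : R → R} {f : R →+* S} {x : S}

theorem delta_zero (hδ : IsSigmaDerivation (RingHom.id R) δ) : δ 0 = 0 := by
  have := hδ.1 0 0; simpa using this.symm

theorem delta_one (hδ : IsSigmaDerivation (RingHom.id R) δ) : δ 1 = 0 := by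
  have := hδ.2 1 1
  simp only [mul_one, one_mul, RingHom.id_apply] at this
  exact right_eq_add.mp this

variable (hδ : IsSigmaDerivation (RingHom.id R) δ)
  (hS : IsOreExtension (RingHom.id R) δ f x)

noncomputable def E (hS : IsOreExtension (RingHom.id R) δ f x) : (ℕ →₀ R) ≃+ S :=
  { Equiv.ofBijective _ hS.basis with
    map_add' := fun a b => by
      show ((a + b).sum fun i r => f r * x ^ i) =
        (a.sum fun i r => f r * x ^ i) + (b.sum fun i r => f r * x ^ i)
      exact Finsupp.sum_add_index' (fun i => by simp) (fun i r1 r2 => by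
        rw [map_add, add_mul]) }

theorem E_apply (a : ℕ →₀ R) : E hS a = a.sum fun i r => f r * x ^ i := rfl

theorem E_single (i : ℕ) (r : R) : E hS (Finsupp.single i r) = f r * x ^ i := by
  rw [E_apply]; exact Finsupp.sum_single_index (by simp)

theorem E_single_zero (r : R) : E hS (Finsupp.single 0 r) = f r := by
  simp [E_single]

theorem symm_f (r : R) : (E hS).symm (f r) = Finsupp.single 0 r := by
  rw [AddEquiv.symm_apply_eq, E_single_zero]

theorem E_smul (r : R) (a : ℕ →₀ R) : E hS (r • a) = f r * E hS a := by
  rw [E_apply, E_apply, Finsupp.mul_sum, Finsupp.sum_smul_index (fun i => by simp)]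
  exact Finsupp.sum_congr fun i _ => by rw [map_mul, mul_assoc]

theorem symm_f_mul (r : R) (s : S) : (E hS).symm (f r * s) = r • (E hS).symm s := by
  rw [AddEquiv.symm_apply_eq, E_smul, AddEquiv.apply_symm_apply]

theorem E_shift (a : ℕ →₀ R) : E hS (a.mapDomain Nat.succ) = E hS a * x := by
  rw [E_apply, E_apply, Finsupp.sum_mul,
    Finsupp.sum_mapDomain_index_inj Nat.succ_injective]
  exact Finsupp.sum_congr fun i _ => by rw [pow_succ, mul_assoc]

theorem x_mul_E' (a : ℕ →₀ R) :
    x * E hS a = E hS (a.mapDomain Nat.succ + a.mapRange δ (delta_zero hδ)) := by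
  rw [E_apply, E_apply, Finsupp.mul_sum, Finsupp.sum_add_index' (fun i => by simp)
    (fun i r1 r2 => by rw [map_add, add_mul]),
    Finsupp.sum_mapDomain_index_inj Nat.succ_injective,
    Finsupp.sum_mapRange_index (fun i => by simp), ← Finsupp.sum_add]
  refine Finsupp.sum_congr fun i _ => ?_
  rw [← mul_assoc, hS.rel, RingHom.id_apply, add_mul, mul_assoc, ← pow_succ']

theorem symm_x_mul (s : S) :
    (E hS).symm (x * s) =
      ((E hS).symm s).mapDomain Nat.succ + ((E hS).symm s).mapRange δ (delta_zero hδ) := by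
  rw [AddEquiv.symm_apply_eq]
  conv_lhs => rw [← AddEquiv.apply_symm_apply (E hS) s]
  rw [x_mul_E' hδ hS]

theorem x_mul_E (a : ℕ →₀ R) :
    x * E hS a = E hS a * x + E hS (a.mapRange δ (delta_zero hδ)) := by
  rw [x_mul_E' hδ hS, map_add, E_shift]

theorem symm_comm_x (s : S) :
    (E hS).symm (x * s - s * x) = ((E hS).symm s).mapRange δ (delta_zero hδ) := by
  rw [AddEquiv.symm_apply_eq, sub_eq_iff_eq_add]
  conv_lhs => rw [← AddEquiv.apply_symm_apply (E hS) s]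
  rw [x_mul_E hδ hS, add_comm, AddEquiv.apply_symm_apply]

include hS in
open Finset in
theorem xpow_mul (m : ℕ) (r : R) :
    x ^ m * f r = ∑ p ∈ antidiagonal m, (m.choose p.1) • (f (δ^[p.1] r) * x ^ p.2) := by
  induction m with
  | zero => simp
  | succ m ih =>
    have key : ∀ (t : R) (j : ℕ), x * (f t * x ^ j) = f t * x ^ (j + 1) + f (δ t) * x ^ j := by
      intro t j
      rw [← mul_assoc, hS.rel, RingHom.id_apply, add_mul, mul_assoc, ← pow_succ']
    have step : ∀ p : ℕ × ℕ, x * ((m.choose p.1) • (f (δ^[p.1] r) * x ^ p.2))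
        = (m.choose p.1) • (f (δ^[p.1] r) * x ^ (p.2 + 1))
          + (m.choose p.1) • (f (δ^[p.1 + 1] r) * x ^ p.2) := by
      intro p
      rw [mul_smul_comm, key, smul_add, Function.iterate_succ_apply']
    calc x ^ (m + 1) * f r = x * (x ^ m * f r) := by rw [pow_succ', mul_assoc]
      _ = ∑ p ∈ antidiagonal m, ((m.choose p.1) • (f (δ^[p.1] r) * x ^ (p.2 + 1))
            + (m.choose p.1) • (f (δ^[p.1 + 1] r) * x ^ p.2)) := by
          rw [ih, mul_sum]; exact Finset.sum_congr rfl fun p _ => step p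
      _ = (∑ p ∈ antidiagonal m, (m.choose p.1) • (f (δ^[p.1] r) * x ^ (p.2 + 1)))
            + ∑ p ∈ antidiagonal m, (m.choose p.1) • (f (δ^[p.1 + 1] r) * x ^ p.2) :=
          Finset.sum_add_distrib
      _ = ∑ p ∈ antidiagonal (m + 1), ((m + 1).choose p.1) • (f (δ^[p.1] r) * x ^ p.2) := by
          have hA : (∑ p ∈ antidiagonal m, (m.choose p.1) • (f (δ^[p.1] r) * x ^ (p.2 + 1)))
              = ∑ p ∈ antidiagonal (m + 1), (m.choose p.1) • (f (δ^[p.1] r) * x ^ p.2) := by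
            rw [Nat.sum_antidiagonal_succ'
              (f := fun p : ℕ × ℕ => (m.choose p.1) • (f (δ^[p.1] r) * x ^ p.2))]
            rw [Nat.choose_eq_zero_of_lt (Nat.lt_succ_self m)]
            simp
          rw [hA, Nat.sum_antidiagonal_succ
            (f := fun p : ℕ × ℕ => (m.choose p.1) • (f (δ^[p.1] r) * x ^ p.2)),
            Nat.sum_antidiagonal_succ
            (f := fun p : ℕ × ℕ => ((m + 1).choose p.1) • (f (δ^[p.1] r) * x ^ p.2))]
          simp only [Nat.choose_succ_succ, add_smul, Nat.choose_zero_right]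
          rw [Finset.sum_add_distrib]
          abel

open Finset in
theorem symm_xpow_mul (m : ℕ) (r : R) :
    (E hS).symm (x ^ m * f r) =
      ∑ p ∈ antidiagonal m, Finsupp.single p.2 ((m.choose p.1) • δ^[p.1] r) := by
  rw [AddEquiv.symm_apply_eq, map_sum, xpow_mul hS]
  refine Finset.sum_congr rfl fun p _ => ?_
  rw [E_single, map_nsmul, smul_mul_assoc]

open Finset in
theorem coeff_xpow_mul_of_lt {m j : ℕ} (h : m < j) (r : R) :
    (E hS).symm (x ^ m * f r) j = 0 := by
  rw [symm_xpow_mul hS, Finset.sum_apply']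
  refine Finset.sum_eq_zero fun p hp => ?_
  have h2 : p.2 ≠ j := by
    have := mem_antidiagonal.mp hp
    omega
  exact Finsupp.single_eq_of_ne' h2

open Finset in
theorem coeff_xpow_mul_self (m : ℕ) (r : R) :
    (E hS).symm (x ^ m * f r) m = r := by
  rw [symm_xpow_mul hS, Finset.sum_apply']
  rw [Finset.sum_eq_single_of_mem ((0, m) : ℕ × ℕ) (by simp)]
  · simp
  · intro q hq hne
    have hqs := mem_antidiagonal.mp hq
    have h2 : q.2 ≠ m := by
      intro h; apply hne
      have : q.1 = 0 := by omega
      exact Prod.ext this h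
    exact Finsupp.single_eq_of_ne' h2

open Finset in
theorem coeff_xpow_mul_pred (m : ℕ) (r : R) :
    (E hS).symm (x ^ (m + 1) * f r) m = (m + 1) • δ r := by
  rw [symm_xpow_mul hS, Finset.sum_apply']
  rw [Finset.sum_eq_single_of_mem ((1, m) : ℕ × ℕ) (by simp [Finset.HasAntidiagonal.mem_antidiagonal, Nat.add_comm])]
  · simp
  · intro q hq hne
    have hqs := mem_antidiagonal.mp hq
    have h2 : q.2 ≠ m := by
      intro h; apply hne
      have : q.1 = 1 := by omega
      exact Prod.ext this h
    exact Finsupp.single_eq_of_ne' h2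

theorem symm_mul (s t : S) :
    (E hS).symm (s * t) = ((E hS).symm s).sum fun i r => r • (E hS).symm (x ^ i * t) := by
  rw [AddEquiv.symm_apply_eq, map_finsuppSum]
  conv_lhs => rw [← AddEquiv.apply_symm_apply (E hS) s, E_apply, Finsupp.sum_mul]
  refine Finsupp.sum_congr fun i _ => ?_
  rw [E_smul, AddEquiv.apply_symm_apply, mul_assoc]

theorem coeff_mul (s t : S) (j : ℕ) :
    (E hS).symm (s * t) j = ((E hS).symm s).sum fun i r => r * (E hS).symm (x ^ i * t) j := by
  rw [symm_mul hS, Finsupp.sum_apply]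
  exact Finsupp.sum_congr fun i _ => rfl

/-- coefficient of `s * f r` at the top degree -/
theorem coeff_mul_f_self (s : S) (r : R) (j : ℕ) (hs : ∀ i, j < i → (E hS).symm s i = 0) :
    (E hS).symm (s * f r) j = (E hS).symm s j * r := by
  rw [coeff_mul hS]
  unfold Finsupp.sum
  rw [Finset.sum_eq_single j]
  · dsimp only; rw [coeff_xpow_mul_self hS]
  · intro i hi hne
    dsimp only
    rcases lt_or_gt_of_ne hne with h | h
    · rw [coeff_xpow_mul_of_lt hS h, mul_zero]
    · rw [hs i h, zero_mul]
  · intro h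
    dsimp only
    rw [Finsupp.notMem_support_iff.mp h, zero_mul]

theorem coeff_mul_f_high (s : S) (r : R) (n : ℕ) (hs : ∀ i, n < i → (E hS).symm s i = 0)
    (j : ℕ) (hj : n < j) : (E hS).symm (s * f r) j = 0 := by
  rw [coeff_mul hS]
  unfold Finsupp.sum
  refine Finset.sum_eq_zero fun i hi => ?_
  dsimp only
  by_cases h : n < i
  · rw [hs i h, zero_mul]
  · rw [coeff_xpow_mul_of_lt hS (show i < j by omega), mul_zero]

include hδ hS in
theorem not_simple [Nontrivial R] (hd : ∀ r, δ r = 0) : ¬ IsSimpleRing S := by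
  intro h
  have hx : ∀ s : S, x * s = s * x := by
    intro s
    conv_lhs => rw [← AddEquiv.apply_symm_apply (E hS) s]
    rw [x_mul_E hδ hS]
    have h0 : Finsupp.mapRange δ (delta_zero hδ) ((E hS).symm s) = 0 := by
      ext i; simp [hd]
    rw [h0, map_zero, add_zero, AddEquiv.apply_symm_apply]
  let K : TwoSidedIdeal S := TwoSidedIdeal.mk' (Set.range (· * x))
    ⟨0, zero_mul x⟩
    (by rintro a b ⟨t, rfl⟩ ⟨t', rfl⟩; exact ⟨t + t', add_mul t t' x⟩)
    (by rintro a ⟨t, rfl⟩; exact ⟨-t, neg_mul t x⟩)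
    (by rintro a b ⟨t, rfl⟩; exact ⟨a * t, mul_assoc a t x⟩)
    (by rintro a b ⟨t, rfl⟩
        exact ⟨t * b, by show t * b * x = t * x * b; rw [mul_assoc, mul_assoc, hx b]⟩)
  have hmemK : ∀ s : S, s ∈ K ↔ ∃ t, t * x = s := fun s => by
    exact TwoSidedIdeal.mem_mk' _ _ _ _ _ _ s
  have hxK : x ∈ K := (hmemK x).mpr ⟨1, one_mul x⟩
  have hxne : x ≠ 0 := by
    intro h0
    have h1 : E hS (Finsupp.single 1 1) = x := by rw [E_single]; simp
    have h2 : Finsupp.single 1 (1 : R) = 0 := by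
      refine (E hS).injective ?_
      rw [map_zero, h1, h0]
    exact one_ne_zero (Finsupp.single_eq_zero.mp h2)
  have h1K : (1 : S) ∉ K := by
    rw [hmemK]
    rintro ⟨t, ht⟩
    have h2 : (E hS).symm (t * x) = ((E hS).symm t).mapDomain Nat.succ := by
      rw [AddEquiv.symm_apply_eq, E_shift, AddEquiv.apply_symm_apply]
    have h3 : (E hS).symm (1 : S) = Finsupp.single 0 1 := by
      rw [← f.map_one, symm_f]
    rw [ht, h3] at h2
    have h4 := congrArg (fun v => v 0) h2
    simp only [Finsupp.single_eq_same] at h4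
    rw [Finsupp.mapDomain_notin_range _ _
      (by rintro ⟨k, hk⟩; exact Nat.succ_ne_zero k hk)] at h4
    exact one_ne_zero h4
  rcases h.simple.eq_bot_or_eq_top K with hK | hK
  · rw [hK, TwoSidedIdeal.mem_bot] at hxK; exact hxne hxK
  · exact h1K (hK ▸ trivial)

end Stmt19Aux

open Stmt19Aux

/-- For a commutative domain `R` of characteristic zero, `R[x;id,δ]` is simple if and
only if `R` is `δ`-simple and a maximal commutative subring of `R[x;id,δ]`. -/
theorem stmt_19 {R S : Type*} [CommRing R] [IsDomain R] [CharZero R] [Ring S] (δ : R → R)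
    (hδ : IsSigmaDerivation (RingHom.id R) δ) (f : R →+* S) (x : S)
    (hS : IsOreExtension (RingHom.id R) δ f x) :
    IsSimpleRing S ↔
      IsDeltaSimple δ ∧ Subring.centralizer (Set.range f) = f.range := by
  classical
  constructor
  · intro h
    constructor
    · -- δ-simplicity
      intro J hJδ
      let I : TwoSidedIdeal S := TwoSidedIdeal.mk' {s | ∀ i, (E hS).symm s i ∈ J}
        (fun i => by rw [map_zero]; exact J.zero_mem)
        (by intro a b ha hb i
            rw [map_add, Finsupp.add_apply]; exact J.add_mem (ha i) (hb i))
        (by intro a ha i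
            rw [map_neg, Finsupp.neg_apply]; exact J.neg_mem (ha i))
        (by intro s t ht j
            have hpow : ∀ k j, (E hS).symm (x ^ k * t) j ∈ J := by
              intro k
              induction k with
              | zero => simpa using ht
              | succ k ihk =>
                intro j
                rw [show x ^ (k+1) * t = x * (x ^ k * t) by rw [pow_succ', mul_assoc],
                  symm_x_mul hδ hS, Finsupp.add_apply]
                refine J.add_mem ?_ ?_
                · cases j with
                  | zero =>
                    rw [Finsupp.mapDomain_notin_range _ _
                      (by rintro ⟨k, hk⟩; exact Nat.succ_ne_zero k hk)]
                    exact J.zero_mem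
                  | succ j =>
                    rw [Finsupp.mapDomain_apply Nat.succ_injective]
                    exact ihk j
                · rw [Finsupp.mapRange_apply]; exact hJδ _ (ihk j)
            rw [coeff_mul hS]
            exact sum_mem fun i hi => J.mul_mem_left _ _ (hpow i j))
        (by intro s t hs j
            rw [coeff_mul hS]
            exact sum_mem fun i hi => J.mul_mem_right _ _ (hs i))
      have hmemI : ∀ s : S, s ∈ I ↔ ∀ i, (E hS).symm s i ∈ J := fun s =>
        TwoSidedIdeal.mem_mk' _ _ _ _ _ _ s
      rcases h.simple.eq_bot_or_eq_top I with hI | hI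
      · left
        refine eq_bot_iff.mpr (TwoSidedIdeal.le_iff.mpr fun r hr => ?_)
        rw [SetLike.mem_coe, TwoSidedIdeal.mem_bot]
        have hfr : f r ∈ I := by
          rw [hmemI]
          intro i
          rw [symm_f hS]
          cases i with
          | zero => rwa [Finsupp.single_eq_same, ← SetLike.mem_coe]
          | succ i =>
            rw [Finsupp.single_eq_of_ne (by omega)]; exact J.zero_mem
        rw [hI, TwoSidedIdeal.mem_bot] at hfr
        have : Finsupp.single 0 r = 0 := by
          rw [← symm_f hS, hfr, map_zero]
        exact Finsupp.single_eq_zero.mp this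
      · right
        refine (TwoSidedIdeal.one_mem_iff J).mp ?_
        have h1 : (1 : S) ∈ I := hI ▸ trivial
        have := (hmemI 1).mp h1 0
        rwa [← f.map_one, symm_f hS, Finsupp.single_eq_same] at this
    · -- maximal commutativity
      ext s
      simp only [Subring.mem_centralizer_iff, RingHom.mem_range]
      constructor
      · intro hc
        have hcomm : ∀ r, f r * s = s * f r := fun r => hc (f r) ⟨r, rfl⟩
        set a := (E hS).symm s with ha
        by_cases h0 : ∀ i, i ≠ 0 → a i = 0
        · refine ⟨a 0, ?_⟩
          have hsing : Finsupp.single 0 (a 0) = a := by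
            ext i
            cases i with
            | zero => rw [Finsupp.single_eq_same]
            | succ i => rw [Finsupp.single_eq_of_ne (by omega), h0 _ (by omega)]
          calc f (a 0) = E hS (Finsupp.single 0 (a 0)) := (E_single_zero hS _).symm
            _ = E hS a := by rw [hsing]
            _ = s := by rw [ha, AddEquiv.apply_symm_apply]
        · exfalso
          push_neg at h0
          obtain ⟨i, hi0, hia⟩ := h0
          have hsupp : i ∈ a.support := Finsupp.mem_support_iff.mpr hia
          have hne : a.support.Nonempty := ⟨i, hsupp⟩
          set n := a.support.max' hne with hn
          have hin : i ≤ n := Finset.le_max' _ i hsupp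
          have han : a n ≠ 0 := Finsupp.mem_support_iff.mp (a.support.max'_mem hne)
          have htop : ∀ k, n < k → a k = 0 := fun k hk =>
            Finsupp.notMem_support_iff.mp fun hm =>
              absurd (Finset.le_max' _ k hm) (by omega)
          obtain ⟨m, hm⟩ : ∃ m, n = m + 1 := ⟨n - 1, by omega⟩
          have hd : ∀ r, δ r = 0 := by
            intro r
            have hdecomp : s = E hS (a.erase n) + f (a n) * x ^ n := by
              rw [← E_single hS, ← map_add, Finsupp.erase_add_single, ha,
                AddEquiv.apply_symm_apply]
            have hL : (E hS).symm (f r * s) m = r * a m := by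
              rw [symm_f_mul hS, Finsupp.smul_apply, smul_eq_mul]
            have hR : (E hS).symm (s * f r) m = a m * r + a n * ((n : ℕ) • δ r) := by
              conv_lhs => rw [hdecomp, add_mul]
              rw [map_add, Finsupp.add_apply]
              have h1 : (E hS).symm (E hS (a.erase n) * f r) m = a m * r := by
                rw [coeff_mul_f_self hS _ _ _ ?hyp]
                · rw [AddEquiv.symm_apply_apply, Finsupp.erase_ne (by omega)]
                case hyp =>
                  intro k hk
                  rw [AddEquiv.symm_apply_apply]
                  by_cases hkn : k = n
                  · rw [hkn, Finsupp.erase_same]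
                  · rw [Finsupp.erase_ne hkn]; exact htop k (by omega)
              have h2 : (E hS).symm (f (a n) * x ^ n * f r) m = a n * ((n:ℕ) • δ r) := by
                rw [mul_assoc, symm_f_mul hS, Finsupp.smul_apply, smul_eq_mul, hm,
                  coeff_xpow_mul_pred hS, ← hm]
              rw [h1, h2]
            have heq : r * a m = a m * r + a n * ((n : ℕ) • δ r) := by
              rw [← hL, ← hR, hcomm r]
            rw [mul_comm r (a m)] at heq
            have h2 : a n * ((n : ℕ) • δ r) = 0 := (left_eq_add.mp heq).symm ▸ rfl
            have h3 : ((n : ℕ) : R) * (a n * δ r) = 0 := by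
              rw [nsmul_eq_mul] at h2
              linear_combination h2
            rcases mul_eq_zero.mp h3 with h4 | h4
            · exact absurd h4 (Nat.cast_ne_zero.mpr (by omega))
            · rcases mul_eq_zero.mp h4 with h5 | h5
              · exact absurd h5 han
              · exact h5
          exact not_simple hδ hS hd h
      · rintro ⟨r, rfl⟩ g ⟨t, rfl⟩
        rw [← map_mul, ← map_mul, mul_comm]
  · rintro ⟨hRs, hcent⟩
    have h1ne : (1 : S) ≠ 0 := by
      intro h10
      have : Finsupp.single 0 (1:R) = 0 := by
        refine (E hS).injective ?_
        rw [map_zero, E_single_zero hS, f.map_one, h10]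
      exact one_ne_zero (Finsupp.single_eq_zero.mp this)
    haveI : Nontrivial (TwoSidedIdeal S) := ⟨⊥, ⊤, fun hbt => by
      have : (1 : S) ∈ (⊥ : TwoSidedIdeal S) := hbt ▸ trivial
      rw [TwoSidedIdeal.mem_bot] at this
      exact h1ne this⟩
    refine ⟨⟨fun I => ?_⟩⟩
    by_cases hI : I = ⊥
    · left; exact hI
    right
    have hex : ∃ s, s ∈ I ∧ s ≠ 0 := by
      by_contra hc
      push_neg at hc
      exact hI (eq_bot_iff.mpr (TwoSidedIdeal.le_iff.mpr fun s hs => by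
        rw [SetLike.mem_coe, TwoSidedIdeal.mem_bot]
        exact hc s hs))
    have hPex : ∃ k, ∃ s, s ∈ I ∧ s ≠ 0 ∧ ∀ i, k < i → (E hS).symm s i = 0 := by
      obtain ⟨s, hsI, hs0⟩ := hex
      refine ⟨((E hS).symm s).support.sup id, s, hsI, hs0, fun i hi => ?_⟩
      by_contra hne
      have hle := Finset.le_sup (f := id) (Finsupp.mem_support_iff.mpr hne)
      simp only [id_eq] at hle
      omega
    set n := Nat.find hPex with hn
    obtain ⟨s, hsI, hs0, hstop⟩ := Nat.find_spec hPex
    let J : TwoSidedIdeal R := TwoSidedIdeal.mk'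
      {r | ∃ t, t ∈ I ∧ (E hS).symm t n = r ∧ ∀ i, n < i → (E hS).symm t i = 0}
      ⟨0, I.zero_mem, by rw [map_zero]; exact ⟨rfl, fun i _ => rfl⟩⟩
      (by rintro r r' ⟨t, htI, rfl, htz⟩ ⟨t', htI', rfl, htz'⟩
          exact ⟨t + t', I.add_mem htI htI', by rw [map_add, Finsupp.add_apply],
            fun i hi => by rw [map_add, Finsupp.add_apply, htz i hi, htz' i hi, add_zero]⟩)
      (by rintro r ⟨t, htI, rfl, htz⟩
          exact ⟨-t, I.neg_mem htI, by rw [map_neg, Finsupp.neg_apply],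
            fun i hi => by rw [map_neg, Finsupp.neg_apply, htz i hi, neg_zero]⟩)
      (by rintro r r' ⟨t, htI, rfl, htz⟩
          exact ⟨f r * t, I.mul_mem_left _ _ htI,
            by rw [symm_f_mul hS, Finsupp.smul_apply, smul_eq_mul],
            fun i hi => by
              rw [symm_f_mul hS, Finsupp.smul_apply, smul_eq_mul, htz i hi, mul_zero]⟩)
      (by rintro r r' ⟨t, htI, rfl, htz⟩
          refine ⟨f r' * t, I.mul_mem_left _ _ htI,
            by rw [symm_f_mul hS, Finsupp.smul_apply, smul_eq_mul, mul_comm],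
            fun i hi => by
              rw [symm_f_mul hS, Finsupp.smul_apply, smul_eq_mul, htz i hi, mul_zero]⟩)
    have hmemJ : ∀ r : R, r ∈ J ↔
        ∃ t, t ∈ I ∧ (E hS).symm t n = r ∧ ∀ i, n < i → (E hS).symm t i = 0 := fun r =>
      TwoSidedIdeal.mem_mk' _ _ _ _ _ _ r
    have hJδ : ∀ r ∈ J, δ r ∈ J := by
      intro r hr
      obtain ⟨t, htI, htn, htz⟩ := (hmemJ r).mp hr
      refine (hmemJ (δ r)).mpr ⟨x * t - t * x,
        I.sub_mem (I.mul_mem_left _ _ htI) (I.mul_mem_right _ _ htI), ?_, ?_⟩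
      · rw [symm_comm_x hδ hS, Finsupp.mapRange_apply, htn]
      · intro i hi
        rw [symm_comm_x hδ hS, Finsupp.mapRange_apply, htz i hi, delta_zero hδ]
    have hsn : (E hS).symm s n ≠ 0 := by
      intro hz
      rcases Nat.eq_zero_or_pos n with h0 | hpos
      · apply hs0
        have : (E hS).symm s = 0 := by
          ext i
          rcases Nat.eq_zero_or_pos i with hi0 | hip
          · rw [hi0, ← h0, hz]; rfl
          · rw [hstop i (by omega)]; rfl
        calc s = E hS ((E hS).symm s) := (AddEquiv.apply_symm_apply _ _).symm
          _ = 0 := by rw [this, map_zero]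
      · have hPm : ∃ u, u ∈ I ∧ u ≠ 0 ∧ ∀ i, n - 1 < i → (E hS).symm u i = 0 :=
          ⟨s, hsI, hs0, fun i hi => by
            rcases eq_or_lt_of_le (show n ≤ i by omega) with he | hlt
            · rw [← he, hz]
            · exact hstop i hlt⟩
        exact Nat.find_min hPex (show n - 1 < n by omega) hPm
    have hJne : J ≠ ⊥ := by
      intro hJb
      apply hsn
      have : (E hS).symm s n ∈ J := (hmemJ _).mpr ⟨s, hsI, rfl, hstop⟩
      rw [hJb, TwoSidedIdeal.mem_bot] at this
      exact this
    have hJtop : J = ⊤ := (hRs J hJδ).resolve_left hJne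
    have h1J : (1 : R) ∈ J := hJtop ▸ trivial
    obtain ⟨u, huI, hun, hutop⟩ := (hmemJ 1).mp h1J
    rcases Nat.eq_zero_or_pos n with hn0 | hnpos
    · have hu1 : u = 1 := by
        have hsymm : (E hS).symm u = Finsupp.single 0 1 := by
          ext i
          rcases Nat.eq_zero_or_pos i with hi0 | hip
          · rw [hi0, ← hn0, hun, Finsupp.single_eq_same]
          · rw [hutop i (by omega), Finsupp.single_eq_of_ne (by omega)]
        calc u = E hS ((E hS).symm u) := (AddEquiv.apply_symm_apply _ _).symm
          _ = E hS (Finsupp.single 0 1) := by rw [hsymm]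
          _ = f 1 := E_single_zero hS 1
          _ = 1 := f.map_one
      exact (TwoSidedIdeal.one_mem_iff I).mp (hu1 ▸ huI)
    · exfalso
      obtain ⟨m, hm⟩ : ∃ m, n = m + 1 := ⟨n - 1, by omega⟩
      have hmin : ∀ t, t ∈ I → (∀ i, m < i → (E hS).symm t i = 0) → t = 0 := by
        intro t htI htc
        by_contra htne
        exact Nat.find_min hPex (show m < n by omega) ⟨t, htI, htne, htc⟩
      have hucomm : ∀ r : R, f r * u = u * f r := by
        intro r
        have hw : f r * u - u * f r = 0 := by
          apply hmin _ (I.sub_mem (I.mul_mem_left _ _ huI) (I.mul_mem_right _ _ huI))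
          intro i hi
          rw [map_sub, Finsupp.sub_apply, symm_f_mul hS, Finsupp.smul_apply, smul_eq_mul]
          rcases eq_or_lt_of_le (show n ≤ i by omega) with he | hlt
          · rw [← he, coeff_mul_f_self hS u r n hutop, hun, one_mul, mul_one, sub_self]
          · rw [hutop i hlt, coeff_mul_f_high hS u r n hutop i hlt, mul_zero, sub_zero]
        exact sub_eq_zero.mp hw
      have hucent : u ∈ Subring.centralizer (Set.range f) := by
        rw [Subring.mem_centralizer_iff]
        rintro g ⟨r, rfl⟩
        exact hucomm r
      rw [hcent, RingHom.mem_range] at hucent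
      obtain ⟨c, hc⟩ := hucent
      have : (E hS).symm u n = 0 := by
        rw [← hc, symm_f hS, Finsupp.single_eq_of_ne (by omega)]
      rw [hun] at this
      exact one_ne_zero this
end
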